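/- Let J be a nilpotent matrix with distinct Jordan block sizes f₁ > ⋯ > f_s with multiplicities m₁,…,m_s, and let M ∈ C(J) be such that M̂ is zero outside the coarse diagonal blocks N₁,…,N_p, with G₁,…,G_s the fine diagonal blocks of N₁. Then rank(M̂ + Ĵ) ≥ rank(G₁^{f₁}) + ⋯ + rank(G_s^{f_s}) + rank(J). -/
import Mathlib

open Matrix Finset Module

namespace Stmt13

variable {K : Type*} [Field K] {s : ℕ} {f m : Fin s → ℕ}

/-- sum over `Fin N` picking out the entry with value `a`. -/
lemma sum_fin_pick {N : ℕ} (a : ℕ) (g : Fin N → K) :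
    (∑ d : Fin N, if (d : ℕ) = a then g d else 0) = if h : a < N then g ⟨a, h⟩ else 0 := by
  split_ifs with h
  · rw [Finset.sum_eq_single_of_mem ⟨a, h⟩ (Finset.mem_univ _)]
    · simp
    · intro d _ hd
      rw [if_neg]
      intro hda
      exact hd (Fin.ext hda)
  · apply Finset.sum_eq_zero
    intro d _
    rw [if_neg]
    intro hda
    exact h (hda ▸ d.isLt)

lemma sum_sigma_fin {α : Fin s → Type*} [∀ i, Fintype (α i)] (g : (Σ i, α i) → K) :
    ∑ x : Σ i, α i, g x = ∑ i, ∑ a : α i, g ⟨i, a⟩ := by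
  rw [← Finset.univ_sigma_univ, Finset.sum_sigma]

section Jordan

variable (J : Matrix (Σ i : Fin s, Fin (m i) × Fin (f i)) (Σ i : Fin s, Fin (m i) × Fin (f i)) K)

variable (hJ : ∀ x y : Σ i : Fin s, Fin (m i) × Fin (f i),
      J x y = if x.1 = y.1 ∧ (x.2.1 : ℕ) = (y.2.1 : ℕ) ∧ (y.2.2 : ℕ) = (x.2.2 : ℕ) + 1
        then 1 else 0)

include hJ

lemma sumJ_row (g : (Σ i : Fin s, Fin (m i) × Fin (f i)) → K) (i : Fin s) (b : Fin (m i))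
    (a : Fin (f i)) :
    ∑ z, J ⟨i, b, a⟩ z * g z =
      if h : (a : ℕ) + 1 < f i then g ⟨i, b, ⟨(a : ℕ) + 1, h⟩⟩ else 0 := by
  split_ifs with h
  · rw [Finset.sum_eq_single_of_mem ⟨i, b, ⟨(a : ℕ) + 1, h⟩⟩ (Finset.mem_univ _)]
    · rw [hJ]
      simp
    · rintro ⟨j, c, d⟩ _ hne
      rw [hJ]
      rw [if_neg, zero_mul]
      rintro ⟨h1, h2, h3⟩
      simp only at h1 h2 h3
      subst h1
      refine hne ?_
      congr 1
      exact Prod.ext (Fin.ext h2.symm) (Fin.ext h3)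
  · apply Finset.sum_eq_zero
    rintro ⟨j, c, d⟩ _
    rw [hJ, if_neg, zero_mul]
    rintro ⟨h1, h2, h3⟩
    simp only at h1 h2 h3
    subst h1
    exact h (h3 ▸ d.isLt)

lemma sumJ_col (g : (Σ i : Fin s, Fin (m i) × Fin (f i)) → K) (j : Fin s) (c : Fin (m j))
    (d : Fin (f j)) :
    ∑ z, g z * J z ⟨j, c, d⟩ =
      if h : 1 ≤ (d : ℕ) then g ⟨j, c, ⟨(d : ℕ) - 1, by omega⟩⟩ else 0 := by
  split_ifs with h
  · rw [Finset.sum_eq_single_of_mem ⟨j, c, ⟨(d : ℕ) - 1, by omega⟩⟩ (Finset.mem_univ _)]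
    · rw [hJ, if_pos, mul_one]
      refine ⟨rfl, rfl, ?_⟩
      show (d : ℕ) = (d : ℕ) - 1 + 1
      omega
    · rintro ⟨j', c', d'⟩ _ hne
      rw [hJ]
      rw [if_neg, mul_zero]
      rintro ⟨h1, h2, h3⟩
      simp only at h1 h2 h3
      subst h1
      refine hne ?_
      congr 1
      refine Prod.ext (Fin.ext h2) (Fin.ext ?_)
      simp only
      omega
  · apply Finset.sum_eq_zero
    rintro ⟨j', c', d'⟩ _
    rw [hJ, if_neg, mul_zero]
    rintro ⟨h1, h2, h3⟩
    simp only at h1 h2 h3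
    omega

end Jordan


section CommuteStruct

variable (hfpos : ∀ i, 0 < f i)
variable (M J : Matrix (Σ i : Fin s, Fin (m i) × Fin (f i)) (Σ i : Fin s, Fin (m i) × Fin (f i)) K)

/-- The common block matrix `A` extracted from `M` at column position `0`. -/
def blkA : Matrix (Σ i : Fin s, Fin (m i)) (Σ i : Fin s, Fin (m i)) K :=
  fun x y => M ⟨x.1, x.2, ⟨0, hfpos x.1⟩⟩ ⟨y.1, y.2, ⟨0, hfpos y.1⟩⟩

variable {M J}
variable (hJ : ∀ x y : Σ i : Fin s, Fin (m i) × Fin (f i),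
      J x y = if x.1 = y.1 ∧ (x.2.1 : ℕ) = (y.2.1 : ℕ) ∧ (y.2.2 : ℕ) = (x.2.2 : ℕ) + 1
        then 1 else 0)
variable (hM : M * J = J * M)

include hJ hM

lemma M_entry_const : ∀ (a : ℕ) (i : Fin s) (b : Fin (m i)) (j : Fin s) (c : Fin (m j))
    (h1 : a < f i) (h2 : a < f j),
    M ⟨i, b, ⟨a, h1⟩⟩ ⟨j, c, ⟨a, h2⟩⟩ = blkA hfpos M ⟨i, b⟩ ⟨j, c⟩ := by
  intro a
  induction a with
  | zero => intro i b j c h1 h2; rfl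
  | succ a ih =>
    intro i b j c h1 h2
    have key : (M * J) ⟨i, b, ⟨a, by omega⟩⟩ ⟨j, c, ⟨a + 1, h2⟩⟩
        = (J * M) ⟨i, b, ⟨a, by omega⟩⟩ ⟨j, c, ⟨a + 1, h2⟩⟩ := by rw [hM]
    rw [Matrix.mul_apply, Matrix.mul_apply] at key
    rw [sumJ_col J hJ (fun z => M ⟨i, b, ⟨a, by omega⟩⟩ z) j c ⟨a + 1, h2⟩] at key
    rw [sumJ_row J hJ (fun z => M z ⟨j, c, ⟨a + 1, h2⟩⟩) i b ⟨a, by omega⟩] at key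
    rw [dif_pos (by simp : 1 ≤ ((⟨a+1,h2⟩ : Fin (f j)) : ℕ))] at key
    rw [dif_pos (by simpa using h1)] at key
    simp only at key
    have ha : (a + 1) - 1 = a := by omega
    rw [← ih i b j c (by omega) (by omega)]
    rw [← key]
    congr 1

end CommuteStruct

section CommuteStruct2

variable (hf : StrictAnti f) (hfpos : ∀ i, 0 < f i)
variable {M J : Matrix (Σ i : Fin s, Fin (m i) × Fin (f i)) (Σ i : Fin s, Fin (m i) × Fin (f i)) K}
variable (hJ : ∀ x y : Σ i : Fin s, Fin (m i) × Fin (f i),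
      J x y = if x.1 = y.1 ∧ (x.2.1 : ℕ) = (y.2.1 : ℕ) ∧ (y.2.2 : ℕ) = (x.2.2 : ℕ) + 1
        then 1 else 0)
variable (hM : M * J = J * M)

include hJ hM

lemma blkA_tri (i : Fin s) (b : Fin (m i)) (j : Fin s) (c : Fin (m j)) (hij : f i < f j) :
    blkA hfpos M ⟨i, b⟩ ⟨j, c⟩ = 0 := by
  have h1 : f i - 1 < f i := by have := hfpos i; omega
  have key : (M * J) ⟨i, b, ⟨f i - 1, h1⟩⟩ ⟨j, c, ⟨f i, hij⟩⟩
      = (J * M) ⟨i, b, ⟨f i - 1, h1⟩⟩ ⟨j, c, ⟨f i, hij⟩⟩ := by rw [hM]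
  rw [Matrix.mul_apply, Matrix.mul_apply] at key
  rw [sumJ_col J hJ _ j c ⟨f i, hij⟩] at key
  rw [sumJ_row J hJ _ i b ⟨f i - 1, h1⟩] at key
  rw [dif_pos (by have := hfpos i; simp; omega : 1 ≤ ((⟨f i, hij⟩ : Fin (f j)) : ℕ))] at key
  rw [dif_neg (by show ¬(f i - 1 + 1 < f i); omega)] at key
  rw [← M_entry_const hfpos hJ hM (f i - 1) i b j c h1 (by omega)]
  rw [← key]

end CommuteStruct2

section Wsec

variable (f)
variable (A : Matrix (Σ i : Fin s, Fin (m i)) (Σ i : Fin s, Fin (m i)) K)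

/-- the recursively defined column slices of a kernel vector. -/
def Wrec (u : (Σ i : Fin s, Fin (m i)) → K) : ℕ → (Σ i : Fin s, Fin (m i)) → K
  | 0 => u
  | (a + 1) => fun x => if a + 1 < f x.1 then -(A.mulVec (Wrec u a)) x else 0

lemma Wrec_zero_of_le (u : (Σ i : Fin s, Fin (m i)) → K) (hfpos : ∀ i, 0 < f i) (a : ℕ)
    (x : Σ i : Fin s, Fin (m i)) (hx : ¬ a < f x.1) : Wrec f A u a x = 0 := by
  cases a with
  | zero => exact absurd (hfpos x.1) hx
  | succ a => simp only [Wrec]; rw [if_neg hx]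

lemma Wrec_add (u v : (Σ i : Fin s, Fin (m i)) → K) (a : ℕ) :
    Wrec f A (u + v) a = Wrec f A u a + Wrec f A v a := by
  induction a with
  | zero => rfl
  | succ a ih =>
    funext x
    simp only [Wrec, ih, Matrix.mulVec_add, Pi.add_apply]
    split_ifs <;> ring

lemma Wrec_smul (k : K) (u : (Σ i : Fin s, Fin (m i)) → K) (a : ℕ) :
    Wrec f A (k • u) a = k • Wrec f A u a := by
  induction a with
  | zero => rfl
  | succ a ih =>
    funext x
    simp only [Wrec, ih, Matrix.mulVec_smul, Pi.smul_apply, smul_eq_mul]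
    split_ifs <;> ring

/-- the constraint map `Ψ`. -/
def Psi : ((Σ i : Fin s, Fin (m i)) → K) →ₗ[K] ((Σ i : Fin s, Fin (m i)) → K) where
  toFun u := fun x => A.mulVec (Wrec f A u (f x.1 - 1)) x
  map_add' u v := by funext x; simp [Wrec_add, Matrix.mulVec_add]
  map_smul' k u := by funext x; simp [Wrec_smul, Matrix.mulVec_smul]

lemma Psi_apply (u : (Σ i : Fin s, Fin (m i)) → K) (x : Σ i : Fin s, Fin (m i)) :
    Psi f A u x = A.mulVec (Wrec f A u (f x.1 - 1)) x := rfl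

end Wsec

section RowSec

variable (hfpos : ∀ i, 0 < f i)
variable {M J : Matrix (Σ i : Fin s, Fin (m i) × Fin (f i)) (Σ i : Fin s, Fin (m i) × Fin (f i)) K}
variable (hJ : ∀ x y : Σ i : Fin s, Fin (m i) × Fin (f i),
      J x y = if x.1 = y.1 ∧ (x.2.1 : ℕ) = (y.2.1 : ℕ) ∧ (y.2.2 : ℕ) = (x.2.2 : ℕ) + 1
        then 1 else 0)
variable (hM : M * J = J * M)
variable (hdiag : ∀ x y : Σ i : Fin s, Fin (m i) × Fin (f i),
      (x.2.2 : ℕ) ≠ (y.2.2 : ℕ) → M x y = 0)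

/-- the slice of a vector at column `a`, as a vector on the block index set. -/
def vslice (v : (Σ i : Fin s, Fin (m i) × Fin (f i)) → K) (a : ℕ) :
    (Σ i : Fin s, Fin (m i)) → K :=
  fun x => if h : a < f x.1 then v ⟨x.1, x.2, ⟨a, h⟩⟩ else 0

include hfpos hJ hM hdiag

lemma row_eq (v : (Σ i : Fin s, Fin (m i) × Fin (f i)) → K) (i : Fin s) (b : Fin (m i))
    (a : ℕ) (ha : a < f i) :
    ((M + J).mulVec v) ⟨i, b, ⟨a, ha⟩⟩ =
      (blkA hfpos M).mulVec (vslice v a) ⟨i, b⟩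
        + (if h : a + 1 < f i then v ⟨i, b, ⟨a + 1, h⟩⟩ else 0) := by
  rw [Matrix.add_mulVec, Pi.add_apply]
  congr 1
  · -- M part
    show ∑ y, M ⟨i, b, ⟨a, ha⟩⟩ y * v y = _
    rw [sum_sigma_fin]
    show _ = ∑ z, blkA hfpos M ⟨i, b⟩ z * vslice v a z
    rw [sum_sigma_fin (fun z => blkA hfpos M ⟨i, b⟩ z * vslice v a z)]
    apply Finset.sum_congr rfl
    intro j _
    rw [Fintype.sum_prod_type]
    apply Finset.sum_congr rfl
    intro c _
    have : ∀ d : Fin (f j), M ⟨i, b, ⟨a, ha⟩⟩ ⟨j, c, d⟩ * v ⟨j, c, d⟩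
        = if (d : ℕ) = a then M ⟨i, b, ⟨a, ha⟩⟩ ⟨j, c, d⟩ * v ⟨j, c, d⟩ else 0 := by
      intro d
      split_ifs with hd
      · rfl
      · rw [hdiag _ _ (by simpa using fun h => hd h.symm), zero_mul]
    rw [Finset.sum_congr rfl (fun d _ => this d), sum_fin_pick]
    unfold vslice
    split_ifs with h
    · rw [M_entry_const hfpos hJ hM a i b j c ha h]
    · rw [mul_zero]
  · -- J part
    show ∑ y, J ⟨i, b, ⟨a, ha⟩⟩ y * v y = _
    rw [sumJ_row J hJ v i b ⟨a, ha⟩]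

lemma slices_eq_Wrec (v : (Σ i : Fin s, Fin (m i) × Fin (f i)) → K)
    (hv : (M + J).mulVec v = 0) (a : ℕ) :
    vslice v a = Wrec f (blkA hfpos M) (vslice v 0) a := by
  induction a with
  | zero => rfl
  | succ a ih =>
    funext x
    obtain ⟨j, c⟩ := x
    by_cases h : a + 1 < f j
    · have hrow := congrFun hv ⟨j, c, ⟨a, by omega⟩⟩
      rw [Pi.zero_apply, row_eq hfpos hJ hM hdiag v j c a (by omega), dif_pos h] at hrow
      show vslice v (a + 1) ⟨j, c⟩ = if a + 1 < f j then _ else _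
      rw [if_pos h]
      have hvs : vslice v (a + 1) ⟨j, c⟩ = v ⟨j, c, ⟨a + 1, h⟩⟩ := dif_pos h
      rw [hvs, ← ih]
      show _ = -((blkA hfpos M).mulVec (vslice v a) ⟨j, c⟩)
      exact eq_neg_of_add_eq_zero_left (by rw [add_comm]; exact hrow)
    · show vslice v (a + 1) ⟨j, c⟩ = Wrec f (blkA hfpos M) (vslice v 0) (a + 1) ⟨j, c⟩
      rw [Wrec_zero_of_le f _ _ hfpos _ _ h]
      unfold vslice
      rw [dif_neg h]

lemma Psi_of_ker (v : (Σ i : Fin s, Fin (m i) × Fin (f i)) → K)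
    (hv : (M + J).mulVec v = 0) :
    Psi f (blkA hfpos M) (vslice v 0) = 0 := by
  funext x
  obtain ⟨t, b⟩ := x
  have hft := hfpos t
  have hrow := congrFun hv ⟨t, b, ⟨f t - 1, by omega⟩⟩
  rw [Pi.zero_apply, row_eq hfpos hJ hM hdiag v t b (f t - 1) (by omega),
    dif_neg (by omega), add_zero] at hrow
  rw [Pi.zero_apply, Psi_apply]
  show (blkA hfpos M).mulVec (Wrec f (blkA hfpos M) (vslice v 0) (f t - 1)) ⟨t, b⟩ = 0
  rw [← slices_eq_Wrec hfpos hJ hM hdiag v hv]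
  exact hrow

lemma ker_inj (v : (Σ i : Fin s, Fin (m i) × Fin (f i)) → K)
    (hv : (M + J).mulVec v = 0) (h0 : vslice v 0 = 0) : v = 0 := by
  have hW : ∀ a, Wrec f (blkA hfpos M) (vslice v 0) a = 0 := by
    intro a
    induction a with
    | zero => exact h0
    | succ a ih =>
      funext x
      simp only [Wrec, ih, Matrix.mulVec_zero, Pi.zero_apply, neg_zero]
      split_ifs <;> rfl
  funext x
  obtain ⟨j, c, d⟩ := x
  have := congrFun (slices_eq_Wrec hfpos hJ hM hdiag v hv (d : ℕ)) ⟨j, c⟩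
  rw [hW] at this
  unfold vslice at this
  rw [dif_pos d.isLt] at this
  simpa using this

end RowSec

section DiagSec

variable (hf : StrictAnti f) (hfpos : ∀ i, 0 < f i)
variable {M J : Matrix (Σ i : Fin s, Fin (m i) × Fin (f i)) (Σ i : Fin s, Fin (m i) × Fin (f i)) K}
variable (hJ : ∀ x y : Σ i : Fin s, Fin (m i) × Fin (f i),
      J x y = if x.1 = y.1 ∧ (x.2.1 : ℕ) = (y.2.1 : ℕ) ∧ (y.2.2 : ℕ) = (x.2.2 : ℕ) + 1
        then 1 else 0)
variable (hM : M * J = J * M)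
variable (G : ∀ t : Fin s, Matrix (Fin (m t)) (Fin (m t)) K)
variable (hG : ∀ (t : Fin s) (b b' : Fin (m t)),
      G t b b' = M ⟨t, b, ⟨0, hfpos t⟩⟩ ⟨t, b', ⟨0, hfpos t⟩⟩)

include hf hfpos hJ hM

lemma Wrec_support (t : Fin s) (u : (Σ i : Fin s, Fin (m i)) → K)
    (hu : ∀ x : Σ i : Fin s, Fin (m i), t < x.1 → u x = 0) :
    ∀ (a : ℕ) (x : Σ i : Fin s, Fin (m i)), t < x.1 →
      Wrec f (blkA hfpos M) u a x = 0 := by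
  intro a
  induction a with
  | zero => exact hu
  | succ a ih =>
    intro x hx
    simp only [Wrec]
    split_ifs with hcond
    · rw [neg_eq_zero]
      show ∑ z, blkA hfpos M x z * Wrec f (blkA hfpos M) u a z = 0
      apply Finset.sum_eq_zero
      intro z _
      rcases lt_or_ge t z.1 with hz | hz
      · rw [ih z hz, mul_zero]
      · have hfz : f x.1 < f z.1 := hf (lt_of_le_of_lt hz hx)
        have h0 : blkA hfpos M x z = 0 := blkA_tri hfpos hJ hM x.1 x.2 z.1 z.2 hfz
        rw [h0, zero_mul]
    · rfl

include hG

lemma Wrec_diag (t : Fin s) (u : (Σ i : Fin s, Fin (m i)) → K)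
    (hu : ∀ x : Σ i : Fin s, Fin (m i), t < x.1 → u x = 0) :
    ∀ (a : ℕ), a < f t → ∀ b : Fin (m t),
      Wrec f (blkA hfpos M) u a ⟨t, b⟩
        = ((-1 : K) ^ a) * ((G t ^ a).mulVec (fun c => u ⟨t, c⟩)) b := by
  intro a
  induction a with
  | zero =>
    intro _ b
    simp [Wrec, Matrix.one_mulVec]
  | succ a ih =>
    intro ha b
    simp only [Wrec]
    rw [if_pos ha]
    have hmv : (blkA hfpos M).mulVec (Wrec f (blkA hfpos M) u a) ⟨t, b⟩
        = ((-1 : K) ^ a) * ((G t ^ (a + 1)).mulVec (fun c => u ⟨t, c⟩)) b := by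
      show ∑ z, blkA hfpos M ⟨t, b⟩ z * Wrec f (blkA hfpos M) u a z = _
      rw [sum_sigma_fin (fun z => blkA hfpos M ⟨t, b⟩ z * Wrec f (blkA hfpos M) u a z)]
      rw [Finset.sum_eq_single_of_mem t (Finset.mem_univ _)]
      · have : ∀ c : Fin (m t), blkA hfpos M ⟨t, b⟩ ⟨t, c⟩ * Wrec f (blkA hfpos M) u a ⟨t, c⟩
            = ((-1 : K) ^ a) * (G t b c * ((G t ^ a).mulVec (fun c => u ⟨t, c⟩)) c) := by
          intro c
          rw [ih (by omega) c]
          have hd : blkA hfpos M ⟨t, b⟩ ⟨t, c⟩ = G t b c := (hG t b c).symm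
          rw [hd]
          ring
        rw [Finset.sum_congr rfl (fun c _ => this c), ← Finset.mul_sum]
        congr 1
        show (G t).mulVec ((G t ^ a).mulVec (fun c => u ⟨t, c⟩)) b = _
        rw [Matrix.mulVec_mulVec, ← pow_succ']
      · intro j _ hjt
        apply Finset.sum_eq_zero
        intro c _
        rcases lt_or_gt_of_ne hjt with hj | hj
        · have hfz : f t < f j := hf hj
          rw [blkA_tri hfpos hJ hM t b j c hfz, zero_mul]
        · rw [Wrec_support hf hfpos hJ hM t u hu a ⟨j, c⟩ hj, mul_zero]
    rw [hmv]
    rw [pow_succ]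
    ring

lemma Psi_diag (t : Fin s) (u : (Σ i : Fin s, Fin (m i)) → K)
    (hu : ∀ x : Σ i : Fin s, Fin (m i), t < x.1 → u x = 0) (b : Fin (m t)) :
    Psi f (blkA hfpos M) u ⟨t, b⟩
      = ((-1 : K) ^ (f t - 1)) * ((G t ^ f t).mulVec (fun c => u ⟨t, c⟩)) b := by
  rw [Psi_apply]
  show (blkA hfpos M).mulVec (Wrec f (blkA hfpos M) u (f t - 1)) ⟨t, b⟩ = _
  show ∑ z, blkA hfpos M ⟨t, b⟩ z * Wrec f (blkA hfpos M) u (f t - 1) z = _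
  rw [sum_sigma_fin (fun z => blkA hfpos M ⟨t, b⟩ z * Wrec f (blkA hfpos M) u (f t - 1) z)]
  rw [Finset.sum_eq_single_of_mem t (Finset.mem_univ _)]
  · have : ∀ c : Fin (m t), blkA hfpos M ⟨t, b⟩ ⟨t, c⟩ * Wrec f (blkA hfpos M) u (f t - 1) ⟨t, c⟩
        = ((-1 : K) ^ (f t - 1)) * (G t b c * ((G t ^ (f t - 1)).mulVec (fun c => u ⟨t, c⟩)) c) := by
      intro c
      rw [Wrec_diag hf hfpos hJ hM G hG t u hu (f t - 1) (by have := hfpos t; omega) c]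
      have hd : blkA hfpos M ⟨t, b⟩ ⟨t, c⟩ = G t b c := (hG t b c).symm
      rw [hd]
      ring
    rw [Finset.sum_congr rfl (fun c _ => this c), ← Finset.mul_sum]
    congr 1
    show (G t).mulVec ((G t ^ (f t - 1)).mulVec (fun c => u ⟨t, c⟩)) b = _
    rw [Matrix.mulVec_mulVec, ← pow_succ']
    congr 2
    have := hfpos t
    omega
  · intro j _ hjt
    apply Finset.sum_eq_zero
    intro c _
    rcases lt_or_gt_of_ne hjt with hj | hj
    · have hfz : f t < f j := hf hj
      rw [blkA_tri hfpos hJ hM t b j c hfz, zero_mul]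
    · rw [Wrec_support hf hfpos hJ hM t u hu (f t - 1) ⟨j, c⟩ hj, mul_zero]

lemma diag_pow_ker (t : Fin s) (u : (Σ i : Fin s, Fin (m i)) → K)
    (hu : ∀ x : Σ i : Fin s, Fin (m i), t < x.1 → u x = 0)
    (hker : Psi f (blkA hfpos M) u = 0) :
    (G t ^ f t).mulVec (fun c => u ⟨t, c⟩) = 0 := by
  funext b
  have h := Psi_diag hf hfpos hJ hM G hG t u hu b
  rw [congrFun hker ⟨t, b⟩] at h
  have hne : ((-1 : K) ^ (f t - 1)) ≠ 0 := pow_ne_zero _ (neg_ne_zero.mpr one_ne_zero)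
  rw [Pi.zero_apply]
  rcases mul_eq_zero.mp h.symm with h' | h'
  · exact absurd h' hne
  · exact h'

end DiagSec

section DimSec

variable (hf : StrictAnti f) (hfpos : ∀ i, 0 < f i)
variable {M J : Matrix (Σ i : Fin s, Fin (m i) × Fin (f i)) (Σ i : Fin s, Fin (m i) × Fin (f i)) K}
variable (hJ : ∀ x y : Σ i : Fin s, Fin (m i) × Fin (f i),
      J x y = if x.1 = y.1 ∧ (x.2.1 : ℕ) = (y.2.1 : ℕ) ∧ (y.2.2 : ℕ) = (x.2.2 : ℕ) + 1
        then 1 else 0)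
variable (hM : M * J = J * M)
variable (G : ∀ t : Fin s, Matrix (Fin (m t)) (Fin (m t)) K)
variable (hG : ∀ (t : Fin s) (b b' : Fin (m t)),
      G t b b' = M ⟨t, b, ⟨0, hfpos t⟩⟩ ⟨t, b', ⟨0, hfpos t⟩⟩)

/-- vectors vanishing on all blocks with index `≥ r`. -/
def blockZero (m : Fin s → ℕ) (r : ℕ) : Submodule K ((Σ i : Fin s, Fin (m i)) → K) where
  carrier := {u | ∀ x : Σ i : Fin s, Fin (m i), r ≤ (x.1 : ℕ) → u x = 0}
  add_mem' := by intro a b ha hb x hx; simp only [Pi.add_apply, ha x hx, hb x hx, add_zero]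
  zero_mem' := fun x _ => rfl
  smul_mem' := by intro c a ha x hx; simp only [Pi.smul_apply, ha x hx, smul_zero]

/-- projection to block `t`. -/
def blockProj (t : Fin s) : ((Σ i : Fin s, Fin (m i)) → K) →ₗ[K] (Fin (m t) → K) where
  toFun u := fun b => u ⟨t, b⟩
  map_add' _ _ := rfl
  map_smul' _ _ := rfl

include hf hfpos hJ hM hG

set_option maxHeartbeats 1000000 in
set_option synthInstance.maxHeartbeats 400000 in
lemma dim_Z (r : ℕ) :
    finrank K (LinearMap.ker (Psi f (blkA hfpos M)) ⊓ blockZero m r : Submodule K _)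
      ≤ ∑ j ∈ Finset.range r,
          (if h : j < s then
            finrank K (LinearMap.ker ((G ⟨j, h⟩ ^ f ⟨j, h⟩).mulVecLin)) else 0) := by
  induction r with
  | zero =>
    rw [Finset.sum_range_zero, Nat.le_zero]
    have hle : (LinearMap.ker (Psi f (blkA hfpos M)) ⊓ blockZero m 0 : Submodule K _) ≤ ⊥ := by
      rintro u ⟨-, hu2⟩
      simp only [Submodule.mem_bot]
      exact funext fun x => hu2 x (Nat.zero_le _)
    have := Submodule.finrank_mono (R := K) hle
    rwa [finrank_bot, Nat.le_zero] at this
  | succ r ih =>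
    rw [Finset.sum_range_succ]
    by_cases h : r < s
    · set t : Fin s := ⟨r, h⟩ with ht
      set Z1 := (LinearMap.ker (Psi f (blkA hfpos M)) ⊓ blockZero m (r+1) : Submodule K _)
        with hZ1
      set ρ : Z1 →ₗ[K] (Fin (m t) → K) := (blockProj t).comp Z1.subtype with hρ
      have hrn := LinearMap.finrank_range_add_finrank_ker ρ
      have hrange : finrank K (LinearMap.range ρ)
          ≤ finrank K (LinearMap.ker ((G t ^ f t).mulVecLin)) := by
        apply Submodule.finrank_mono
        rintro - ⟨⟨u, hu⟩, rfl⟩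
        rw [LinearMap.mem_ker, Matrix.mulVecLin_apply]
        have hu1 : Psi f (blkA hfpos M) u = 0 := hu.1
        have hu2 : ∀ x : Σ i : Fin s, Fin (m i), t < x.1 → u x = 0 := by
          intro x hx
          have hvx : (r : ℕ) < (x.1 : ℕ) := hx
          exact hu.2 x (by omega)
        exact diag_pow_ker hf hfpos hJ hM G hG t u hu2 hu1
      have hker : finrank K (LinearMap.ker ρ)
          ≤ finrank K (LinearMap.ker (Psi f (blkA hfpos M)) ⊓ blockZero m r
              : Submodule K _) := by
        have hg : ∀ u : LinearMap.ker ρ,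
            (u.1.1 : (Σ i : Fin s, Fin (m i)) → K)
              ∈ (LinearMap.ker (Psi f (blkA hfpos M)) ⊓ blockZero m r : Submodule K _) := by
          rintro ⟨⟨u, hu⟩, huk⟩
          have huk' : (fun b => u ⟨t, b⟩) = 0 := LinearMap.mem_ker.mp huk
          refine ⟨hu.1, ?_⟩
          rintro ⟨x1, x2⟩ hx
          have hx' : r ≤ (x1 : ℕ) := hx
          rcases Nat.lt_or_ge (x1 : ℕ) (r + 1) with hx1 | hx1
          · have hx1t : x1 = t := Fin.ext (by show (x1 : ℕ) = r; omega)
            subst hx1t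
            have := congrFun huk' x2
            simpa using this
          · exact hu.2 ⟨x1, x2⟩ hx1
        let g : LinearMap.ker ρ →ₗ[K]
            (LinearMap.ker (Psi f (blkA hfpos M)) ⊓ blockZero m r : Submodule K _) :=
          { toFun := fun u => ⟨u.1.1, hg u⟩
            map_add' := fun _ _ => rfl
            map_smul' := fun _ _ => rfl }
        apply LinearMap.finrank_le_finrank_of_injective (f := g)
        intro a b hab
        have h2 : (g a).1 = (g b).1 := congrArg Subtype.val hab
        exact Subtype.ext (Subtype.ext h2)
      rw [dif_pos h]
      have hteq : (⟨r, h⟩ : Fin s) = t := rfl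
      rw [hteq]
      omega
    · rw [dif_neg h, add_zero]
      refine le_trans (Submodule.finrank_mono ?_) ih
      rintro u ⟨hu1, hu2⟩
      refine ⟨hu1, ?_⟩
      intro x hx
      exact absurd x.1.isLt (by omega)

lemma claimB :
    finrank K (LinearMap.ker (Psi f (blkA hfpos M)))
      ≤ ∑ t : Fin s, finrank K (LinearMap.ker ((G t ^ f t).mulVecLin)) := by
  have h1 : finrank K (LinearMap.ker (Psi f (blkA hfpos M)))
      ≤ finrank K (LinearMap.ker (Psi f (blkA hfpos M)) ⊓ blockZero m s : Submodule K _) := by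
    apply Submodule.finrank_mono
    intro u hu
    exact ⟨hu, fun x hx => absurd x.1.isLt (by omega)⟩
  refine le_trans (le_trans h1 (dim_Z hf hfpos hJ hM G hG s)) (le_of_eq ?_)
  rw [← Fin.sum_univ_eq_sum_range (fun j =>
    if h : j < s then finrank K (LinearMap.ker ((G ⟨j, h⟩ ^ f ⟨j, h⟩).mulVecLin)) else 0) s]
  apply Finset.sum_congr rfl
  intro i _
  rw [dif_pos i.isLt]

end DimSec

section ClaimA

variable (hfpos : ∀ i, 0 < f i)
variable {M J : Matrix (Σ i : Fin s, Fin (m i) × Fin (f i)) (Σ i : Fin s, Fin (m i) × Fin (f i)) K}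
variable (hJ : ∀ x y : Σ i : Fin s, Fin (m i) × Fin (f i),
      J x y = if x.1 = y.1 ∧ (x.2.1 : ℕ) = (y.2.1 : ℕ) ∧ (y.2.2 : ℕ) = (x.2.2 : ℕ) + 1
        then 1 else 0)
variable (hM : M * J = J * M)
variable (hdiag : ∀ x y : Σ i : Fin s, Fin (m i) × Fin (f i),
      (x.2.2 : ℕ) ≠ (y.2.2 : ℕ) → M x y = 0)

/-- slicing at column 0 as a linear map. -/
def vslice0L (f m : Fin s → ℕ) :
    ((Σ i : Fin s, Fin (m i) × Fin (f i)) → K) →ₗ[K] ((Σ i : Fin s, Fin (m i)) → K) where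
  toFun v := vslice v 0
  map_add' u v := by
    funext x
    by_cases h : 0 < f x.1
    · simp only [vslice, Pi.add_apply, dif_pos h]
    · simp only [vslice, Pi.add_apply, dif_neg h, add_zero]
  map_smul' k u := by
    funext x
    by_cases h : 0 < f x.1
    · simp only [vslice, Pi.smul_apply, dif_pos h, RingHom.id_apply]
    · simp only [vslice, Pi.smul_apply, dif_neg h, smul_zero, RingHom.id_apply]

include hfpos hJ hM hdiag

lemma claimA :
    finrank K (LinearMap.ker (M + J).mulVecLin)
      ≤ finrank K (LinearMap.ker (Psi f (blkA hfpos M))) := by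
  have hmem : ∀ v : LinearMap.ker (M + J).mulVecLin,
      ((vslice0L f m).comp (LinearMap.ker (M + J).mulVecLin).subtype) v
        ∈ LinearMap.ker (Psi f (blkA hfpos M)) := by
    intro v
    rw [LinearMap.mem_ker]
    exact Psi_of_ker hfpos hJ hM hdiag v.1 (LinearMap.mem_ker.mp v.2)
  let g : LinearMap.ker (M + J).mulVecLin →ₗ[K] LinearMap.ker (Psi f (blkA hfpos M)) :=
    LinearMap.codRestrict _ ((vslice0L f m).comp (LinearMap.ker (M + J).mulVecLin).subtype)
      hmem
  apply LinearMap.finrank_le_finrank_of_injective (f := g)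
  intro a b hab
  have h2 : vslice (a.1 : (Σ i : Fin s, Fin (m i) × Fin (f i)) → K) 0 = vslice b.1 0 :=
    congrArg Subtype.val hab
  have hva := LinearMap.mem_ker.mp a.2
  have hvb := LinearMap.mem_ker.mp b.2
  rw [Matrix.mulVecLin_apply] at hva hvb
  have h3 : vslice (a.1 - b.1 : (Σ i : Fin s, Fin (m i) × Fin (f i)) → K) 0 = 0 := by
    have hsub : vslice (a.1 - b.1 : (Σ i : Fin s, Fin (m i) × Fin (f i)) → K) 0
        = vslice (a.1 : (Σ i : Fin s, Fin (m i) × Fin (f i)) → K) 0 - vslice b.1 0 :=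
      map_sub (vslice0L f m) _ _
    rw [hsub, h2, sub_self]
  have h4 : (a.1 - b.1 : (Σ i : Fin s, Fin (m i) × Fin (f i)) → K) = 0 := by
    apply ker_inj hfpos hJ hM hdiag _ _ h3
    rw [Matrix.mulVec_sub, hva, hvb, sub_self]
  exact Subtype.ext (sub_eq_zero.mp h4)

/-- the natural embedding into the kernel of `J`. -/
lemma kerJ_big :
    ∑ t, m t ≤ finrank K (LinearMap.ker J.mulVecLin) := by
  have hmem : ∀ u : (Σ i : Fin s, Fin (m i)) → K,
      (fun x : Σ i : Fin s, Fin (m i) × Fin (f i) =>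
        if (x.2.2 : ℕ) = 0 then u ⟨x.1, x.2.1⟩ else 0) ∈ LinearMap.ker J.mulVecLin := by
    intro u
    rw [LinearMap.mem_ker, Matrix.mulVecLin_apply]
    funext x
    obtain ⟨i, b, a⟩ := x
    show ∑ z, J ⟨i, b, a⟩ z * _ = _
    rw [sumJ_row J hJ _ i b a]
    split_ifs with h h2
    · exact absurd h2 (by simp)
    · rfl
    · rfl
  let g0 : ((Σ i : Fin s, Fin (m i)) → K) →ₗ[K]
      ((Σ i : Fin s, Fin (m i) × Fin (f i)) → K) :=
    { toFun := fun u x => if (x.2.2 : ℕ) = 0 then u ⟨x.1, x.2.1⟩ else 0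
      map_add' := fun u v => by
        funext x
        by_cases h : (x.2.2 : ℕ) = 0 <;> simp [h]
      map_smul' := fun k u => by
        funext x
        by_cases h : (x.2.2 : ℕ) = 0 <;> simp [h] }
  let g : ((Σ i : Fin s, Fin (m i)) → K) →ₗ[K] LinearMap.ker J.mulVecLin :=
    LinearMap.codRestrict _ g0 hmem
  have hinj : Function.Injective g := by
    intro a b hab
    have h2 : g0 a = g0 b := congrArg Subtype.val hab
    funext z
    have := congrFun h2 ⟨z.1, z.2, ⟨0, hfpos z.1⟩⟩
    simpa [g0] using this
  have := LinearMap.finrank_le_finrank_of_injective hinj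
  rw [finrank_fintype_fun_eq_card, Fintype.card_sigma] at this
  simpa using this

end ClaimA

end Stmt13

open Module

theorem rank_of_coarse_diagonal_plus_jordan_ge (K : Type*) [Field K] (s : ℕ)
    (f m : Fin s → ℕ) (hf : StrictAnti f) (hfpos : ∀ i, 0 < f i) (hmpos : ∀ i, 0 < m i)
    (J M : Matrix (Σ i : Fin s, Fin (m i) × Fin (f i)) (Σ i : Fin s, Fin (m i) × Fin (f i)) K)
    (hJ : ∀ x y : Σ i : Fin s, Fin (m i) × Fin (f i),
      J x y = if x.1 = y.1 ∧ (x.2.1 : ℕ) = (y.2.1 : ℕ) ∧ (y.2.2 : ℕ) = (x.2.2 : ℕ) + 1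
        then 1 else 0)
    (hM : M * J = J * M)
    (hdiag : ∀ x y : Σ i : Fin s, Fin (m i) × Fin (f i),
      (x.2.2 : ℕ) ≠ (y.2.2 : ℕ) → M x y = 0)
    (G : ∀ t : Fin s, Matrix (Fin (m t)) (Fin (m t)) K)
    (hG : ∀ (t : Fin s) (b b' : Fin (m t)),
      G t b b' = M ⟨t, b, ⟨0, hfpos t⟩⟩ ⟨t, b', ⟨0, hfpos t⟩⟩) :
    (M + J).rank ≥ (∑ t, ((G t) ^ (f t)).rank) + J.rank := by
  classical
  have hA := Stmt13.claimA hfpos hJ hM hdiag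
  have hB := Stmt13.claimB hf hfpos hJ hM G hG
  have hJbig := Stmt13.kerJ_big hfpos hJ hM hdiag
  have h1 : (M + J).rank + finrank K (LinearMap.ker (M + J).mulVecLin)
      = finrank K ((Σ i : Fin s, Fin (m i) × Fin (f i)) → K) :=
    LinearMap.finrank_range_add_finrank_ker (M + J).mulVecLin
  have h2 : J.rank + finrank K (LinearMap.ker J.mulVecLin)
      = finrank K ((Σ i : Fin s, Fin (m i) × Fin (f i)) → K) :=
    LinearMap.finrank_range_add_finrank_ker J.mulVecLin
  have h3 : ∀ t : Fin s, ((G t) ^ (f t)).rank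
      + finrank K (LinearMap.ker ((G t ^ f t)).mulVecLin) = m t := by
    intro t
    have := LinearMap.finrank_range_add_finrank_ker ((G t ^ f t)).mulVecLin
    rwa [finrank_fintype_fun_eq_card, Fintype.card_fin] at this
  have h4 : (∑ t, ((G t) ^ (f t)).rank)
      + (∑ t, finrank K (LinearMap.ker ((G t ^ f t)).mulVecLin)) = ∑ t, m t := by
    rw [← Finset.sum_add_distrib]
    exact Finset.sum_congr rfl fun t _ => h3 t
  have h5 : finrank K (LinearMap.ker (M + J).mulVecLin)
      ≤ ∑ t, finrank K (LinearMap.ker ((G t ^ f t)).mulVecLin) := le_trans hA hB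
  omega
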